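/- arXiv:2012.15778 — 2 statements merged into one kernel-verified Lean document; each statement's English description precedes it below -/
import Mathlib

section
/- Let K be a field, n a positive integer, v ∈ K, and u ∈ K with u ≠ 0, uⁿ ≠ 1 and u⁻ⁿ ≠ 1. Let x be an integer with x ≢ 0 (mod n), and let gx, gmx ∈ K satisfy gx·gmx = v. Write a = ⌈x⌉ₙ and note ⌈−x⌉ₙ = n − a. Define the 2×2 matrix S(u) with entries S(u)₁₁ = (1−v)·u^{a−1}/(1−uⁿ), S(u)₁₂ = gx·u⁻¹, S(u)₂₁ = gmx·u⁻¹, S(u)₂₂ = (1−v)·u^{n−a−1}/(1−uⁿ). Then S(u⁻¹)·S(u) = λ·I where λ = (1−v uⁿ)(1−v u⁻ⁿ)/((1−uⁿ)(1−u⁻ⁿ)). -/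
/-- The `2×2` Kazhdan–Patterson scattering matrix `S(u)` restricted to the span
indexed by `θ` and `s_iθ`. -/
def scatteringMatrix {K : Type*} [Field K] (v gx gmx : K) (n : ℕ) (a : ℤ) (u : K) :
    Matrix (Fin 2) (Fin 2) K :=
  !![(1 - v) * u ^ (a - 1) / (1 - u ^ (n : ℤ)), gx * u⁻¹;
     gmx * u⁻¹, (1 - v) * u ^ ((n : ℤ) - a - 1) / (1 - u ^ (n : ℤ))]

/-- with `u ≠ 0`, `uⁿ ≠ 1`, `u⁻ⁿ ≠ 1`, `x ≢ 0 (mod n)`,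
`gx·gmx = v`, and `a = ⌈x⌉ₙ` (so `⌈-x⌉ₙ = n - a`), the scattering matrices satisfy
the unitarity relation `S(u⁻¹)·S(u) = λ·I` with
`λ = (1 - v uⁿ)(1 - v u⁻ⁿ)/((1 - uⁿ)(1 - u⁻ⁿ))`. -/
theorem scattering_unitarity (K : Type*) [Field K] (n : ℕ) (hn : 0 < n)
    (v u gx gmx : K) (hu : u ≠ 0) (hun : u ^ (n : ℤ) ≠ 1) (humn : u ^ (-(n : ℤ)) ≠ 1)
    (x : ℤ) (hx : ¬ (n : ℤ) ∣ x) (hg : gx * gmx = v)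
    (a : ℤ) (ha0 : 0 < a) (han : a ≤ n) (hamod : a ≡ x [ZMOD (n : ℤ)]) :
    scatteringMatrix v gx gmx n a u⁻¹ * scatteringMatrix v gx gmx n a u =
      ((1 - v * u ^ (n : ℤ)) * (1 - v * u ^ (-(n : ℤ))) /
          ((1 - u ^ (n : ℤ)) * (1 - u ^ (-(n : ℤ))))) •
        (1 : Matrix (Fin 2) (Fin 2) K) := by
  have hiz : ∀ k : ℤ, (u⁻¹) ^ k = (u ^ k)⁻¹ := fun k => inv_zpow u k
  have hpqw : u ^ (a - 1) * u ^ ((n:ℤ) - a - 1) * u * u = u ^ (n:ℤ) := by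
    have h : u ^ (a-1) * u ^ ((n:ℤ)-a-1) * u * u = u ^ ((a-1) + ((n:ℤ)-a-1) + 1 + 1) := by
      rw [zpow_add₀ hu, zpow_add₀ hu, zpow_add₀ hu, zpow_one]
    rw [h]
    congr 1
    ring
  unfold scatteringMatrix
  simp only [hiz, zpow_neg, inv_inv]
  generalize hP : u ^ (a - 1) = p at *
  generalize hQ : u ^ ((n:ℤ) - a - 1) = q at *
  generalize hW : u ^ (n:ℤ) = w at *
  have hp : p ≠ 0 := hP ▸ zpow_ne_zero _ hu
  have hq : q ≠ 0 := hQ ▸ zpow_ne_zero _ hu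
  have hw : w ≠ 0 := hW ▸ zpow_ne_zero _ hu
  have h1 : (1:K) - w ≠ 0 := sub_ne_zero.2 (Ne.symm hun)
  have h1' : w - (1:K) ≠ 0 := sub_ne_zero.2 (sub_ne_zero.1 h1).symm
  rw [← hg]
  ext i j
  fin_cases i <;> fin_cases j <;>
    · simp [Matrix.mul_apply, Fin.sum_univ_two, Matrix.one_apply]
      field_simp
      rw [← hpqw]
      ring
end

section
/- Let K be a field, v ∈ K a nonzero element, n a positive integer, and let F = K(X) be the field of rational functions with the K-algebra involution σ determined by σ(X) = X⁻¹. Fix an integer x with 0 ≤ x < n and elements gx, gmx ∈ K with gx·gmx = v if x ≠ 0, and gx = gmx = −v if x = 0. Let a = ⌈x⌉ₙ and a' = ⌈−x⌉ₙ (least strictly positive residues mod n). Define the K-linear operator T on F² by (T f)₁ = [(1−v)(X^{a−1}σ(f₁) − f₁) + gx·X⁻¹(1−Xⁿ)σ(f₂)]/(1−Xⁿ) and (T f)₂ = [(1−v)(X^{a'−1}σ(f₂) − f₂) + gmx·X⁻¹(1−Xⁿ)σ(f₁)]/(1−Xⁿ) when x ≠ 0, and in the case x = 0 by the single-component operator (T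 f) = [(1−v)(X^{n−1}σ(f) − f) + g(0)·X⁻¹(1−Xⁿ)σ(f)]/(1−Xⁿ) on F. Then T satisfies the quadratic Hecke relation (T − v)(T + 1) = 0. -/
open RatFunc

/-- One component of the rank-one vector metaplectic Demazure–Whittaker operator:
`f, f'` are the two components of the vector; the parameters are `v`, the Gauss sum
`gx`, the exponent `a = ⌈x⌉ₙ`, the degree `n` of the cover, and the involution `σ`
with `σ(X) = X⁻¹`. -/
noncomputable def DWcomp {K : Type*} [Field K] (v gx : K) (a : ℤ) (n : ℕ)
    (σ : RatFunc K →ₐ[K] RatFunc K) (f f' : RatFunc K) : RatFunc K :=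
  ((1 - RatFunc.C v) * ((RatFunc.X : RatFunc K) ^ (a - 1) * σ f - f) +
      RatFunc.C gx * (RatFunc.X : RatFunc K)⁻¹ *
        (1 - (RatFunc.X : RatFunc K) ^ (n : ℤ)) * σ f') /
    (1 - (RatFunc.X : RatFunc K) ^ (n : ℤ))

lemma DW_D_ne_zero {K : Type*} [Field K] {n : ℕ} (hn : 0 < n) :
    (1 : RatFunc K) - (RatFunc.X : RatFunc K) ^ n ≠ 0 := by
  have h := RatFunc.algebraMap_ne_zero (Polynomial.X_pow_sub_C_ne_zero hn (1 : K))
  rw [map_sub, map_pow, RatFunc.algebraMap_X, Polynomial.C_1, map_one] at h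
  intro h0
  exact h (by rw [← neg_sub, h0, neg_zero])

section Key
variable {K : Type*} [Field K] (v : K) (σ : RatFunc K →ₐ[K] RatFunc K)
  (hσX : σ (RatFunc.X : RatFunc K) = (RatFunc.X : RatFunc K)⁻¹)
  (hσinv : ∀ f : RatFunc K, σ (σ f) = f)

/-- `T f f' = N / D` with `D = 1 - X^n`, for `a = p+1`, `n = p + r`, `r ≥ 1`. -/
lemma DW_T_eq (g : K) (p r : ℕ) (f f' : RatFunc K) :
    DWcomp v g ((p : ℤ) + 1) (p + r) σ f f' =
      ((1 - RatFunc.C v) * ((RatFunc.X : RatFunc K) ^ p * σ f - f) +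
          RatFunc.C g * (RatFunc.X : RatFunc K)⁻¹ *
            (1 - (RatFunc.X : RatFunc K) ^ (p + r)) * σ f') /
        (1 - (RatFunc.X : RatFunc K) ^ (p + r)) := by
  simp only [DWcomp, add_sub_cancel_right, zpow_natCast]

include hσX hσinv in
/-- `σ (T f f') = M / D` with the same denominator `D`. -/
lemma DW_sigmaT_eq (g : K) (p r : ℕ) (hr : 0 < r) (f f' : RatFunc K) :
    σ (DWcomp v g ((p : ℤ) + 1) (p + r) σ f f') =
      ((1 - RatFunc.C v) * ((RatFunc.X : RatFunc K) ^ (p + r) * σ f -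
            (RatFunc.X : RatFunc K) ^ r * f) +
          RatFunc.C g * (RatFunc.X : RatFunc K) *
            (1 - (RatFunc.X : RatFunc K) ^ (p + r)) * f') /
        (1 - (RatFunc.X : RatFunc K) ^ (p + r)) := by
  have hσC : ∀ c : K, σ (RatFunc.C c) = RatFunc.C c := fun c => by
    rw [← RatFunc.algebraMap_eq_C]; exact σ.commutes c
  have hX : (RatFunc.X : RatFunc K) ≠ 0 := RatFunc.X_ne_zero
  have hpr : 0 < p + r := by omega
  have hD : (1 : RatFunc K) - (RatFunc.X : RatFunc K) ^ (p + r) ≠ 0 := DW_D_ne_zero hpr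
  have hD' : (RatFunc.X : RatFunc K) ^ (p + r) - 1 ≠ 0 := by
    intro h0; exact hD (by rw [← neg_sub, h0, neg_zero])
  have hD'' : (1 : RatFunc K) - ((RatFunc.X : RatFunc K) ^ (p + r))⁻¹ ≠ 0 := by
    rw [sub_ne_zero]
    intro h0
    exact hD' (by rw [← inv_inv ((RatFunc.X : RatFunc K) ^ (p + r)), ← h0, inv_one, sub_self])
  rw [DW_T_eq]
  simp only [map_div₀, map_add, map_mul, map_sub, map_one, map_pow, map_inv₀,
    hσX, hσC, hσinv, inv_inv, inv_pow]
  rw [div_eq_div_iff hD'' hD]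
  field_simp
  ring
end Key

section Main
variable {K : Type*} [Field K] (v : K) (σ : RatFunc K →ₐ[K] RatFunc K)
  (hσX : σ (RatFunc.X : RatFunc K) = (RatFunc.X : RatFunc K)⁻¹)
  (hσinv : ∀ f : RatFunc K, σ (σ f) = f)

include hσX hσinv in
set_option maxHeartbeats 4000000 in
lemma DW_key (g g' : K) (p q n : ℕ) (hn : n = p + q + 2) (f₁ f₂ : RatFunc K) :
    DWcomp (g * g') g ((p : ℤ) + 1) n σ
        (DWcomp (g * g') g ((p : ℤ) + 1) n σ f₁ f₂)
        (DWcomp (g * g') g' ((q : ℤ) + 1) n σ f₂ f₁) +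
      DWcomp (g * g') g ((p : ℤ) + 1) n σ f₁ f₂ -
      RatFunc.C (g * g') * DWcomp (g * g') g ((p : ℤ) + 1) n σ f₁ f₂ -
      RatFunc.C (g * g') * f₁ = 0 := by
  subst hn
  have e1 : p + (q + 2) = p + q + 2 := by omega
  have e2 : q + (p + 2) = p + q + 2 := by omega
  have hX : (RatFunc.X : RatFunc K) ≠ 0 := RatFunc.X_ne_zero
  have hD : (1 : RatFunc K) - (RatFunc.X : RatFunc K) ^ (p + q + 2) ≠ 0 :=
    DW_D_ne_zero (by omega)
  have h1 := DW_T_eq (g * g') σ g p (q + 2) f₁ f₂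
  have h2 := DW_T_eq (g * g') σ g' q (p + 2) f₂ f₁
  rw [e1] at h1; rw [e2] at h2
  have hs1 := DW_sigmaT_eq (g * g') σ hσX hσinv g p (q + 2) (by omega) f₁ f₂
  have hs2 := DW_sigmaT_eq (g * g') σ hσX hσinv g' q (p + 2) (by omega) f₂ f₁
  rw [e1] at hs1; rw [e2] at hs2
  have houter := DW_T_eq (g * g') σ g p (q + 2)
    (DWcomp (g * g') g ((p : ℤ) + 1) (p + q + 2) σ f₁ f₂)
    (DWcomp (g * g') g' ((q : ℤ) + 1) (p + q + 2) σ f₂ f₁)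
  rw [e1] at houter
  rw [houter, hs1, hs2, h1, map_mul]
  obtain ⟨D, hDdef⟩ : ∃ D, D = (1 : RatFunc K) - RatFunc.X ^ (p + q + 2) := ⟨_, rfl⟩
  rw [← hDdef] at hD ⊢
  obtain ⟨n1, hn1⟩ : ∃ t, t = (1 - RatFunc.C g * RatFunc.C g') *
      ((RatFunc.X : RatFunc K) ^ p * σ f₁ - f₁) +
      RatFunc.C g * (RatFunc.X : RatFunc K)⁻¹ * D * σ f₂ := ⟨_, rfl⟩
  obtain ⟨m1, hm1⟩ : ∃ t, t = (1 - RatFunc.C g * RatFunc.C g') *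
      ((RatFunc.X : RatFunc K) ^ (p + q + 2) * σ f₁ - (RatFunc.X : RatFunc K) ^ (q + 2) * f₁) +
      RatFunc.C g * (RatFunc.X : RatFunc K) * D * f₂ := ⟨_, rfl⟩
  obtain ⟨m2, hm2⟩ : ∃ t, t = (1 - RatFunc.C g * RatFunc.C g') *
      ((RatFunc.X : RatFunc K) ^ (p + q + 2) * σ f₂ - (RatFunc.X : RatFunc K) ^ (p + 2) * f₂) +
      RatFunc.C g' * (RatFunc.X : RatFunc K) * D * f₁ := ⟨_, rfl⟩
  rw [← hn1, ← hm1, ← hm2]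
  field_simp
  subst hn1 hm1 hm2 hDdef
  field_simp
  ring
end Main

section Main0
variable {K : Type*} [Field K] (v : K) (σ : RatFunc K →ₐ[K] RatFunc K)
  (hσX : σ (RatFunc.X : RatFunc K) = (RatFunc.X : RatFunc K)⁻¹)
  (hσinv : ∀ f : RatFunc K, σ (σ f) = f)

include hσX hσinv in
set_option maxHeartbeats 4000000 in
lemma DW_key0 (g : K) (hg : g = -v) (m n : ℕ) (hn : n = m + 1) (f : RatFunc K) :
    DWcomp v g ((m : ℤ) + 1) n σ (DWcomp v g ((m : ℤ) + 1) n σ f f)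
        (DWcomp v g ((m : ℤ) + 1) n σ f f) +
      DWcomp v g ((m : ℤ) + 1) n σ f f -
      RatFunc.C v * DWcomp v g ((m : ℤ) + 1) n σ f f -
      RatFunc.C v * f = 0 := by
  subst hn hg
  have hX : (RatFunc.X : RatFunc K) ≠ 0 := RatFunc.X_ne_zero
  have hD : (1 : RatFunc K) - (RatFunc.X : RatFunc K) ^ (m + 1) ≠ 0 :=
    DW_D_ne_zero (by omega)
  have h1 := DW_T_eq v σ (-v) m 1 f f
  have hs1 := DW_sigmaT_eq v σ hσX hσinv (-v) m 1 one_pos f f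
  have houter := DW_T_eq v σ (-v) m 1
    (DWcomp v (-v) ((m : ℤ) + 1) (m + 1) σ f f)
    (DWcomp v (-v) ((m : ℤ) + 1) (m + 1) σ f f)
  rw [houter, hs1, h1]
  obtain ⟨D, hDdef⟩ : ∃ D, D = (1 : RatFunc K) - RatFunc.X ^ (m + 1) := ⟨_, rfl⟩
  rw [← hDdef] at hD ⊢
  obtain ⟨n1, hn1⟩ : ∃ t, t = (1 - RatFunc.C v) *
      ((RatFunc.X : RatFunc K) ^ m * σ f - f) +
      RatFunc.C (-v) * (RatFunc.X : RatFunc K)⁻¹ * D * σ f := ⟨_, rfl⟩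
  obtain ⟨m1, hm1⟩ : ∃ t, t = (1 - RatFunc.C v) *
      ((RatFunc.X : RatFunc K) ^ (m + 1) * σ f - (RatFunc.X : RatFunc K) ^ 1 * f) +
      RatFunc.C (-v) * (RatFunc.X : RatFunc K) * D * f := ⟨_, rfl⟩
  rw [← hn1, ← hm1]
  field_simp
  subst hn1 hm1 hDdef
  field_simp
  simp only [map_neg]
  ring
end Main0

/-- the rank-one vector metaplectic Demazure–Whittaker operator
satisfies the quadratic Hecke relation `(T - v)(T + 1) = 0`, i.e.
`T²f + Tf - v·Tf - v·f = 0` componentwise; in the case `x ≠ 0` the operator acts on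
pairs `(f₁, f₂)` with parameters `(gx, a)` and `(gmx, a')`, and in the case `x = 0`
it acts on a single function with parameters `(gx, a)` where `a = n` and `gx = -v`. -/
theorem DW_hecke_relation (K : Type*) [Field K] (v : K) (hv : v ≠ 0) (n : ℕ)
    (hn : 0 < n) (σ : RatFunc K →ₐ[K] RatFunc K)
    (hσX : σ (RatFunc.X : RatFunc K) = (RatFunc.X : RatFunc K)⁻¹)
    (hσinv : ∀ f : RatFunc K, σ (σ f) = f)
    (x : ℤ) (hx0 : 0 ≤ x) (hxn : x < n)
    (gx gmx : K) (hg : x ≠ 0 → gx * gmx = v) (hg0 : x = 0 → gx = -v ∧ gmx = -v)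
    (a a' : ℤ) (ha0 : 0 < a) (han : a ≤ n) (hamod : a ≡ x [ZMOD (n : ℤ)])
    (ha'0 : 0 < a') (ha'n : a' ≤ n) (ha'mod : a' ≡ -x [ZMOD (n : ℤ)]) :
    (x ≠ 0 → ∀ f₁ f₂ : RatFunc K,
      DWcomp v gx a n σ (DWcomp v gx a n σ f₁ f₂) (DWcomp v gmx a' n σ f₂ f₁) +
          DWcomp v gx a n σ f₁ f₂ -
          RatFunc.C v * DWcomp v gx a n σ f₁ f₂ - RatFunc.C v * f₁ = 0 ∧
      DWcomp v gmx a' n σ (DWcomp v gmx a' n σ f₂ f₁) (DWcomp v gx a n σ f₁ f₂) +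
          DWcomp v gmx a' n σ f₂ f₁ -
          RatFunc.C v * DWcomp v gmx a' n σ f₂ f₁ - RatFunc.C v * f₂ = 0) ∧
    (x = 0 → ∀ f : RatFunc K,
      DWcomp v gx a n σ (DWcomp v gx a n σ f f) (DWcomp v gx a n σ f f) +
          DWcomp v gx a n σ f f -
          RatFunc.C v * DWcomp v gx a n σ f f - RatFunc.C v * f = 0) := by
  have hnpos : (0 : ℤ) < (n : ℤ) := by exact_mod_cast hn
  have hdiv : ∀ t : ℤ, (n : ℤ) ∣ t → 0 < t → t < 2 * (n : ℤ) → t = (n : ℤ) := by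
    rintro t ⟨k, rfl⟩ h1 h2
    have hk1 : 1 ≤ k := by nlinarith
    have hk2 : k < 2 := by nlinarith
    have hk : k = 1 := by omega
    rw [hk, mul_one]
  have hd1 : (n : ℤ) ∣ a - x := Int.ModEq.dvd hamod.symm
  have hd2 : (n : ℤ) ∣ a' - -x := Int.ModEq.dvd ha'mod.symm
  constructor
  · intro hx f₁ f₂
    have hgv : gx * gmx = v := hg hx
    have hane : a ≠ (n : ℤ) := by
      intro h
      have hdx : (n : ℤ) ∣ x := by
        have := dvd_sub (dvd_refl (n : ℤ)) (h ▸ hd1)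
        simpa using this
      have := Int.le_of_dvd (by omega) hdx
      omega
    have hsum : a + a' = (n : ℤ) := by
      have hdd : (n : ℤ) ∣ a + a' := by
        have := dvd_add hd1 hd2
        have e : a - x + (a' - -x) = a + a' := by ring
        rwa [e] at this
      exact hdiv _ hdd (by omega) (by omega)
    set p : ℕ := (a - 1).toNat with hp
    set q : ℕ := (a' - 1).toNat with hq
    have hap : a = (p : ℤ) + 1 := by rw [hp]; omega
    have ha'q : a' = (q : ℤ) + 1 := by rw [hq]; omega
    have hnpq : n = p + q + 2 := by omega
    rw [← hgv, hap, ha'q]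
    constructor
    · exact DW_key σ hσX hσinv gx gmx p q n hnpq f₁ f₂
    · rw [mul_comm gx gmx]
      exact DW_key σ hσX hσinv gmx gx q p n (by omega) f₂ f₁
  · intro hx f
    obtain ⟨hgx, -⟩ := hg0 hx
    have han' : a = (n : ℤ) := by
      refine hdiv a ?_ ha0 (by omega)
      simpa [hx] using hd1
    have hm : a = ((n - 1 : ℕ) : ℤ) + 1 := by omega
    rw [hm]
    exact DW_key0 v σ hσX hσinv gx hgx (n - 1) n (by omega) f
end
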